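/- Let ν be a σ-finite measure on a measurable space and let g, h be measurable functions with g(ω), h(ω) > 0 for ν-a.e. ω, and let k be a real-valued measurable function with ∫ k²·(g·h/(g+h)) dν < ∞. Then the infimum, over all measurable decompositions k = f₁ + f₂, of ∫ f₁²·g dν + ∫ f₂²·h dν equals ∫ k²/(g⁻¹ + h⁻¹) dν = ∫ k²·g·h/(g+h) dν. -/

import Mathlib

open MeasureTheory
open scoped ENNReal

lemma sum_weighted_L2_aux (a1 a2 g h : ℝ) (hg : 0 < g) (hh : 0 < h) :
    (a1 + a2) ^ 2 * (g * h / (g + h)) ≤ a1 ^ 2 * g + a2 ^ 2 * h := by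
  have hgh : 0 < g + h := by linarith
  rw [mul_div_assoc', div_le_iff₀ hgh]
  nlinarith [sq_nonneg (a1 * g - a2 * h)]

theorem sum_weighted_L2_norm {Ω : Type*} [MeasurableSpace Ω] (ν : Measure Ω)
    [SigmaFinite ν] (g h k : Ω → ℝ) (hg : Measurable g) (hh : Measurable h)
    (hk : Measurable k)
    (hgpos : ∀ᵐ ω ∂ν, 0 < g ω) (hhpos : ∀ᵐ ω ∂ν, 0 < h ω)
    (hfin : ∫⁻ ω, ENNReal.ofReal ((k ω) ^ 2 * (g ω * h ω / (g ω + h ω))) ∂ν ≠ ∞) :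
    sInf {r : ℝ≥0∞ | ∃ f₁ f₂ : Ω → ℝ, Measurable f₁ ∧ Measurable f₂ ∧
        (∀ ω, k ω = f₁ ω + f₂ ω) ∧
        r = (∫⁻ ω, ENNReal.ofReal ((f₁ ω) ^ 2 * g ω) ∂ν)
            + ∫⁻ ω, ENNReal.ofReal ((f₂ ω) ^ 2 * h ω) ∂ν}
      = ∫⁻ ω, ENNReal.ofReal ((k ω) ^ 2 / ((g ω)⁻¹ + (h ω)⁻¹)) ∂ν ∧
    (∫⁻ ω, ENNReal.ofReal ((k ω) ^ 2 / ((g ω)⁻¹ + (h ω)⁻¹)) ∂ν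
        = ∫⁻ ω, ENNReal.ofReal ((k ω) ^ 2 * (g ω * h ω / (g ω + h ω))) ∂ν) := by
  have hE : (∫⁻ ω, ENNReal.ofReal ((k ω) ^ 2 / ((g ω)⁻¹ + (h ω)⁻¹)) ∂ν
      = ∫⁻ ω, ENNReal.ofReal ((k ω) ^ 2 * (g ω * h ω / (g ω + h ω))) ∂ν) := by
    refine lintegral_congr_ae ?_
    filter_upwards [hgpos, hhpos] with ω hgω hhω
    congr 1
    have hne : g ω + h ω ≠ 0 := by positivity
    field_simp
    ring
  refine ⟨?_, hE⟩
  rw [hE]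
  -- define witness decomposition
  set f₁ : Ω → ℝ := fun ω => if g ω + h ω = 0 then k ω else k ω * (h ω / (g ω + h ω))
    with hf₁def
  set f₂ : Ω → ℝ := fun ω => k ω - f₁ ω with hf₂def
  have hmf₁ : Measurable f₁ := by
    apply Measurable.ite (measurableSet_eq_fun (hg.add hh) measurable_const) hk
    exact hk.mul (hh.div (hg.add hh))
  have hmf₂ : Measurable f₂ := hk.sub hmf₁
  refine le_antisymm ?_ ?_
  · -- sInf ≤ value of witness
    have hmem : ((∫⁻ ω, ENNReal.ofReal ((f₁ ω) ^ 2 * g ω) ∂ν)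
        + ∫⁻ ω, ENNReal.ofReal ((f₂ ω) ^ 2 * h ω) ∂ν) ∈
        {r : ℝ≥0∞ | ∃ f₁ f₂ : Ω → ℝ, Measurable f₁ ∧ Measurable f₂ ∧
          (∀ ω, k ω = f₁ ω + f₂ ω) ∧
          r = (∫⁻ ω, ENNReal.ofReal ((f₁ ω) ^ 2 * g ω) ∂ν)
              + ∫⁻ ω, ENNReal.ofReal ((f₂ ω) ^ 2 * h ω) ∂ν} :=
      ⟨f₁, f₂, hmf₁, hmf₂, fun ω => by simp [hf₂def], rfl⟩
    refine le_trans (sInf_le hmem) (le_of_eq ?_)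
    rw [← lintegral_add_left (by fun_prop)]
    refine lintegral_congr_ae ?_
    filter_upwards [hgpos, hhpos] with ω hgω hhω
    have hne : g ω + h ω ≠ 0 := by positivity
    have h1 : f₁ ω = k ω * (h ω / (g ω + h ω)) := by simp [hf₁def, hne]
    have h2 : f₂ ω = k ω * (g ω / (g ω + h ω)) := by
      simp only [hf₂def, h1]
      field_simp
      ring
    rw [← ENNReal.ofReal_add (by positivity) (by positivity)]
    congr 1
    rw [h1, h2]
    field_simp
    ring
  · -- lower bound
    refine le_sInf ?_
    rintro r ⟨a₁, a₂, hma₁, hma₂, hsum, rfl⟩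
    calc ∫⁻ ω, ENNReal.ofReal ((k ω) ^ 2 * (g ω * h ω / (g ω + h ω))) ∂ν
        ≤ ∫⁻ ω, (ENNReal.ofReal ((a₁ ω) ^ 2 * g ω)
            + ENNReal.ofReal ((a₂ ω) ^ 2 * h ω)) ∂ν := by
          refine lintegral_mono_ae ?_
          filter_upwards [hgpos, hhpos] with ω hgω hhω
          refine le_trans ?_ ENNReal.ofReal_add_le
          apply ENNReal.ofReal_le_ofReal
          rw [hsum ω]
          exact sum_weighted_L2_aux _ _ _ _ hgω hhω
      _ = _ := lintegral_add_left (by fun_prop) _
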